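/- Let Q be a probability distribution on a finite set X, and set χ = -log₂(min{Q(x) : Q(x) ≠ 0}). Then any rate function R over Q satisfies n·R(x) ≤ χ for every x with Q(x) > 0. Consequently, E_Q[2^{n·Ω_R(X)}] ≤ 1 + ln(2)·χ for every function R : X → ℝ, where Ω_R(x) = -(1/n)·log₂(Q{x' : R(x') ≥ R(x)}). -/

import Mathlib

open Finset

private lemma sum_div_suffix_le {X Y : Type*} [LinearOrder Y] [DecidableEq X]
    (Q : X → ℝ) (k : X → Y) (hk : Function.Injective k)
    (m : ℝ) (hm : 0 < m) :
    ∀ s : Finset X, s.Nonempty → (∀ x ∈ s, m ≤ Q x) →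
      ∑ x ∈ s, Q x / (∑ x' ∈ s.filter (fun x' => k x ≤ k x'), Q x')
        ≤ 1 + Real.log (∑ x ∈ s, Q x) - Real.log m := by
  intro s
  induction s using Finset.strongInduction with
  | _ s ih =>
    intro hne hQm
    obtain ⟨x₀, hx₀s, hx₀min⟩ := s.exists_min_image k hne
    have hQpos : ∀ x ∈ s, 0 < Q x := fun x hx => lt_of_lt_of_le hm (hQm x hx)
    set s' := s.erase x₀ with hs'
    have hT : 0 < ∑ x ∈ s, Q x := Finset.sum_pos hQpos hne
    have hfilt0 : s.filter (fun x' => k x₀ ≤ k x') = s :=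
      Finset.filter_true_of_mem (fun x hx => hx₀min x hx)
    have hfilt : ∀ x ∈ s', s.filter (fun x' => k x ≤ k x')
        = s'.filter (fun x' => k x ≤ k x') := by
      intro x hx
      have hxne : x ≠ x₀ := Finset.ne_of_mem_erase hx
      have hx₀not : x₀ ∉ s.filter (fun x' => k x ≤ k x') := by
        simp only [Finset.mem_filter]
        rintro ⟨-, hle⟩
        exact hxne (hk (le_antisymm hle (hx₀min x (Finset.mem_of_mem_erase hx))))
      rw [hs', Finset.filter_erase, Finset.erase_eq_of_notMem hx₀not]
    have hsplit : ∀ f : X → ℝ, ∑ x ∈ s, f x = f x₀ + ∑ x ∈ s', f x := by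
      intro f; rw [hs', Finset.add_sum_erase s f hx₀s]
    rcases s'.eq_empty_or_nonempty with he | hne'
    · have hseq : s = {x₀} := by
        rcases (Finset.erase_eq_empty_iff s x₀).mp he with h | h
        · exact absurd h (Finset.nonempty_iff_ne_empty.mp hne)
        · exact h
      subst hseq
      rw [Finset.sum_singleton, Finset.sum_singleton] at *
      rw [hfilt0, Finset.sum_singleton, div_self (hQpos x₀ hx₀s).ne']
      have := Real.log_le_log hm (hQm x₀ hx₀s)
      linarith
    · have hT' : 0 < ∑ x ∈ s', Q x :=
        Finset.sum_pos (fun x hx => hQpos x (Finset.mem_of_mem_erase hx)) hne'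
      have hIH := ih s' (Finset.erase_ssubset hx₀s) hne'
        (fun x hx => hQm x (Finset.mem_of_mem_erase hx))
      have hTsplit : ∑ x ∈ s, Q x = Q x₀ + ∑ x ∈ s', Q x := hsplit Q
      have hkey : Q x₀ / (∑ x ∈ s, Q x)
          ≤ Real.log (∑ x ∈ s, Q x) - Real.log (∑ x ∈ s', Q x) := by
        have h1 := Real.log_le_sub_one_of_pos (div_pos hT' hT)
        rw [Real.log_div hT'.ne' hT.ne'] at h1
        have h2 : (∑ x ∈ s', Q x) / (∑ x ∈ s, Q x) - 1
            = -(Q x₀ / (∑ x ∈ s, Q x)) := by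
          field_simp
          linarith [hTsplit]
        rw [h2] at h1
        linarith
      calc ∑ x ∈ s, Q x / (∑ x' ∈ s.filter (fun x' => k x ≤ k x'), Q x')
          = Q x₀ / (∑ x ∈ s, Q x)
            + ∑ x ∈ s', Q x / (∑ x' ∈ s'.filter (fun x' => k x ≤ k x'), Q x') := by
            rw [hsplit (fun x => Q x / (∑ x' ∈ s.filter (fun x' => k x ≤ k x'), Q x')),
              hfilt0]
            congr 1
            exact Finset.sum_congr rfl (fun x hx => by rw [hfilt x hx])
        _ ≤ Q x₀ / (∑ x ∈ s, Q x) + (1 + Real.log (∑ x ∈ s', Q x) - Real.log m) := by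
            linarith
        _ ≤ 1 + Real.log (∑ x ∈ s, Q x) - Real.log m := by linarith

/-- With `χ = -log₂(min of Q on its support)`: every rate function `R` over `Q`
satisfies `n·R(x) ≤ χ` on the support of `Q`, and consequently
`E_Q[2^{n·Ω_R(X)}] ≤ 1 + ln(2)·χ` for every function `R`. -/
theorem normal_prior_bound
    {X : Type*} [Fintype X] [Nonempty X]
    (Q : X → ℝ) (hQ0 : ∀ x, 0 ≤ Q x) (hQ1 : ∑ x, Q x = 1)
    (hs : (univ.filter fun x => Q x ≠ 0).Nonempty)
    (n : ℝ) (hn : 0 < n)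
    (χ : ℝ) (hχ : χ = -Real.logb 2 ((univ.filter fun x => Q x ≠ 0).inf' hs Q)) :
    (∀ R : X → ℝ,
      (∀ t : ℝ, ∑ x ∈ univ.filter (fun x => t ≤ R x), Q x ≤ (2 : ℝ) ^ (-n * t)) →
      ∀ x, 0 < Q x → n * R x ≤ χ) ∧
    (∀ R : X → ℝ, ∀ Ω : X → ℝ,
      (∀ x, Ω x = -(1 / n) * Real.logb 2
          (∑ x' ∈ univ.filter (fun x' => R x ≤ R x'), Q x')) →
      ∑ x, Q x * (2 : ℝ) ^ (n * Ω x) ≤ 1 + Real.log 2 * χ) := by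
  classical
  set s := univ.filter fun x : X => Q x ≠ 0 with hsdef
  set m := s.inf' hs Q with hmdef
  have hm : 0 < m := by
    rw [hmdef]
    refine (Finset.lt_inf'_iff hs).mpr (fun x hx => ?_)
    have : Q x ≠ 0 := by simpa [hsdef] using hx
    exact lt_of_le_of_ne (hQ0 x) (Ne.symm this)
  have hmle : ∀ x, 0 < Q x → m ≤ Q x := fun x hx =>
    Finset.inf'_le Q (by simp [hsdef, hx.ne'])
  constructor
  · intro R hR x hx
    have h2 : Q x ≤ ∑ x' ∈ univ.filter (fun x' => R x ≤ R x'), Q x' :=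
      Finset.single_le_sum (fun y _ => hQ0 y) (by simp)
    have h3 : m ≤ (2:ℝ) ^ (-n * R x) := le_trans (hmle x hx) (le_trans h2 (hR (R x)))
    have h4 : Real.logb 2 m ≤ Real.logb 2 ((2:ℝ) ^ (-n * R x)) :=
      Real.logb_le_logb_of_le (by norm_num) hm h3
    rw [Real.logb_rpow (by norm_num) (by norm_num)] at h4
    rw [hχ]
    linarith
  · intro R Ω hΩ
    set e := Fintype.equivFin X with he
    set k : X → ℝ ×ₗ ℕ := fun x => toLex (R x, (e x : ℕ)) with hkdef
    have hk : Function.Injective k := by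
      intro a b hab
      have h := toLex.injective hab
      have h2 : (e a : ℕ) = e b := congrArg Prod.snd h
      exact e.injective (Fin.val_injective h2)
    have hkR : ∀ a b : X, k a ≤ k b → R a ≤ R b := by
      intro a b hab
      rcases Prod.Lex.le_iff.mp hab with h | h
      · exact le_of_lt h
      · exact le_of_eq h.1
    set F := fun x => ∑ x' ∈ univ.filter (fun x' => R x ≤ R x'), Q x' with hF
    set G := fun x => ∑ x' ∈ s.filter (fun x' => k x ≤ k x'), Q x' with hG
    have hGpos : ∀ x ∈ s, 0 < G x := by
      intro x hx
      refine Finset.sum_pos' (fun y hy => hQ0 y) ⟨x, ?_, ?_⟩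
      · exact Finset.mem_filter.mpr ⟨hx, le_refl _⟩
      · have : Q x ≠ 0 := by simpa [hsdef] using hx
        exact lt_of_le_of_ne (hQ0 x) (Ne.symm this)
    have hGF : ∀ x, G x ≤ F x := by
      intro x
      refine Finset.sum_le_sum_of_subset_of_nonneg ?_ (fun y _ _ => hQ0 y)
      intro y hy
      rcases Finset.mem_filter.mp hy with ⟨-, hle⟩
      exact Finset.mem_filter.mpr ⟨Finset.mem_univ y, hkR x y hle⟩
    have hFpos : ∀ x ∈ s, 0 < F x := fun x hx => lt_of_lt_of_le (hGpos x hx) (hGF x)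
    have hterm : ∀ x ∈ s, Q x * (2:ℝ) ^ (n * Ω x) = Q x * (F x)⁻¹ := by
      intro x hx
      have h1 : n * Ω x = -Real.logb 2 (F x) := by
        rw [hΩ x]; simp only [hF]; field_simp
      rw [h1, Real.rpow_neg (by norm_num), Real.rpow_logb two_pos (by norm_num) (hFpos x hx)]
    have hzero : ∀ x ∈ (univ : Finset X), x ∉ s → Q x * (2:ℝ) ^ (n * Ω x) = 0 := by
      intro x _ hx
      have : Q x = 0 := by simpa [hsdef] using hx
      simp [this]
    rw [← Finset.sum_subset s.subset_univ hzero]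
    have hsum1 : ∑ x ∈ s, Q x = 1 := by
      rw [Finset.sum_subset s.subset_univ (fun x _ hx => by simpa [hsdef] using hx)]
      exact hQ1
    have haux := sum_div_suffix_le Q k hk m hm s hs (fun x hx => hmle x
      (lt_of_le_of_ne (hQ0 x) (Ne.symm (by simpa [hsdef] using hx))))
    calc ∑ x ∈ s, Q x * (2:ℝ) ^ (n * Ω x)
        = ∑ x ∈ s, Q x * (F x)⁻¹ := Finset.sum_congr rfl hterm
      _ ≤ ∑ x ∈ s, Q x / G x := by
          refine Finset.sum_le_sum (fun x hx => ?_)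
          rw [div_eq_mul_inv]
          exact mul_le_mul_of_nonneg_left
            (inv_anti₀ (hGpos x hx) (hGF x)) (hQ0 x)
      _ ≤ 1 + Real.log (∑ x ∈ s, Q x) - Real.log m := haux
      _ = 1 + Real.log 2 * χ := by
          rw [hsum1, Real.log_one, hχ, Real.logb]
          have hl2 : Real.log 2 ≠ 0 := by
            have := Real.log_pos (by norm_num : (1:ℝ) < 2); linarith
          field_simp
          ring
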